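/- Let f : ℝⁿ → ℝ be real analytic with f(0) = 0 and ∇f(0) = 0, and suppose (Łojasiewicz) there exist c > 0, γ ∈ [1/2, 1), ε > 0 with ‖∇f(x)‖ ≥ c|f(x)|^γ for ‖x‖ < ε. If u : [0,∞) → ℝⁿ is a trajectory of u' = -∇f(u) that remains in the ball of radius ε and f(u(t)) > 0 for all t, then u has finite length: ∫₀^∞ ‖u'(t)‖ dt ≤ (1/(c(1-γ))) f(u(0))^{1-γ}, and hence u(t) converges as t → ∞. -/

import Mathlib

open Filter MeasureTheory

/-- Łojasiewicz convergence for gradient flow: if `f : ℝⁿ → ℝ` is `C¹`, satisfies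
the gradient inequality `‖∇f(x)‖ ≥ c|f(x)|^γ` on the ε-ball, and `u` is a
trajectory of `u' = -∇f(u)` staying in the ε-ball with `f(u(t)) > 0`, then `u`
has finite length bounded by `(1/(c(1−γ)))·f(u 0)^(1−γ)` and converges. -/
theorem stmt_18 (n : ℕ) (f : EuclideanSpace ℝ (Fin n) → ℝ) (hf : ContDiff ℝ 1 f)
    (c γ ε : ℝ) (hc : 0 < c) (hγ : γ ∈ Set.Ico (1 / 2 : ℝ) 1) (hε : 0 < ε)
    (hloj : ∀ x : EuclideanSpace ℝ (Fin n), ‖x‖ < ε →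
      c * |f x| ^ γ ≤ ‖gradient f x‖)
    (u : ℝ → EuclideanSpace ℝ (Fin n))
    (hu : ∀ t ∈ Set.Ici (0 : ℝ), HasDerivAt u (-gradient f (u t)) t)
    (hball : ∀ t ∈ Set.Ici (0 : ℝ), ‖u t‖ < ε)
    (hpos : ∀ t ∈ Set.Ici (0 : ℝ), 0 < f (u t)) :
    MeasureTheory.IntegrableOn (fun t => ‖gradient f (u t)‖) (Set.Ioi 0) ∧
      (∫ t in Set.Ioi (0 : ℝ), ‖gradient f (u t)‖)
        ≤ (1 / (c * (1 - γ))) * f (u 0) ^ (1 - γ) ∧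
      ∃ L, Tendsto u atTop (nhds L) := by
  obtain ⟨hγ2, hγ1⟩ := hγ
  have h1γ : 0 < 1 - γ := by linarith
  have hdiff : Differentiable ℝ f := hf.differentiable one_ne_zero
  set M : ℝ := (1 / (c * (1 - γ))) * f (u 0) ^ (1 - γ) with hM
  -- continuity of the gradient
  have hgradc : Continuous (fun x => gradient f x) := by
    have h1 : Continuous (fderiv ℝ f) := hf.continuous_fderiv one_ne_zero
    exact (InnerProductSpace.toDual ℝ
      (EuclideanSpace ℝ (Fin n))).symm.continuous.comp h1
  have hcu : ContinuousOn u (Set.Ici 0) := fun t ht =>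
    (hu t ht).continuousAt.continuousWithinAt
  -- gradient norm function and its continuity
  have hGcont : ContinuousOn (fun t => ‖gradient f (u t)‖) (Set.Ici 0) :=
    ((hgradc.comp_continuousOn hcu).norm)
  -- derivative of f ∘ u
  have hφ : ∀ t ∈ Set.Ici (0:ℝ),
      HasDerivAt (fun s => f (u s)) (-‖gradient f (u t)‖ ^ 2) t := by
    intro t ht
    have h1 : HasDerivAt (fun s => f (u s))
        ((fderiv ℝ f (u t)) (-gradient f (u t))) t :=
      (hdiff (u t)).hasFDerivAt.comp_hasDerivAt t (hu t ht)
    convert h1 using 1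
    have h2 : (fderiv ℝ f (u t)) (-gradient f (u t))
        = @inner ℝ _ _ (gradient f (u t)) (-gradient f (u t)) :=
      (InnerProductSpace.toDual_symm_apply).symm
    rw [h2, inner_neg_right, real_inner_self_eq_norm_sq]
  -- derivative of h
  set D : ℝ → ℝ := fun t =>
    (1 / (c * (1 - γ))) * ((-‖gradient f (u t)‖ ^ 2) * (1 - γ) * f (u t) ^ (1 - γ - 1)) with hD
  have hh : ∀ t ∈ Set.Ici (0:ℝ),
      HasDerivAt (fun s => (1 / (c * (1 - γ))) * f (u s) ^ (1 - γ)) (D t) t := by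
    intro t ht
    exact ((hφ t ht).rpow_const (Or.inl (hpos t ht).ne')).const_mul _
  -- the key pointwise inequality
  have hkey : ∀ t ∈ Set.Ici (0:ℝ), ‖gradient f (u t)‖ ≤ -D t := by
    intro t ht
    set G := ‖gradient f (u t)‖ with hG
    have ha : 0 < f (u t) := hpos t ht
    have hl : c * (f (u t)) ^ γ ≤ G := by
      have := hloj (u t) (hball t ht)
      rwa [abs_of_pos ha] at this
    have hDval : -D t = (1/c) * (f (u t)) ^ (-γ) * G ^ 2 := by
      rw [hD]
      have : (1 - γ - 1 : ℝ) = -γ := by ring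
      rw [this]
      field_simp
      ring
    rw [hDval]
    have h2 : c * (f (u t)) ^ γ * G ≤ G * G :=
      mul_le_mul_of_nonneg_right hl (norm_nonneg _)
    have haγ : (0:ℝ) < (f (u t)) ^ γ := Real.rpow_pos_of_pos ha γ
    calc G = (1/c) * (f (u t)) ^ (-γ) * (c * (f (u t)) ^ γ * G) := by
            rw [Real.rpow_neg ha.le]
            field_simp
      _ ≤ (1/c) * (f (u t)) ^ (-γ) * (G * G) := by
            apply mul_le_mul_of_nonneg_left h2
            positivity
      _ = (1/c) * (f (u t)) ^ (-γ) * G ^ 2 := by ring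
  -- continuity of D on Ici 0
  have hfu : ContinuousOn (fun t => f (u t)) (Set.Ici 0) := hf.continuous.comp_continuousOn hcu
  have hDcont : ContinuousOn D (Set.Ici 0) := by
    apply ContinuousOn.mul continuousOn_const
    apply ContinuousOn.mul
    · exact ((hGcont.pow 2).neg).mul continuousOn_const
    · exact hfu.rpow_const fun t ht => Or.inl (hpos t ht).ne'
  -- uniform bound on interval integrals
  have hbound : ∀ T : ℝ, 0 ≤ T → (∫ t in (0:ℝ)..T, ‖gradient f (u t)‖) ≤ M := by
    intro T hT
    have hsub : Set.uIcc (0:ℝ) T ⊆ Set.Ici 0 := by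
      rw [Set.uIcc_of_le hT]; exact Set.Icc_subset_Ici_self
    have hDint : IntervalIntegrable D MeasureTheory.volume 0 T :=
      (hDcont.mono hsub).intervalIntegrable
    have hGint : IntervalIntegrable (fun t => ‖gradient f (u t)‖) MeasureTheory.volume 0 T :=
      (hGcont.mono hsub).intervalIntegrable
    have ftc : (∫ t in (0:ℝ)..T, D t)
        = (1 / (c * (1 - γ))) * f (u T) ^ (1 - γ)
          - (1 / (c * (1 - γ))) * f (u 0) ^ (1 - γ) :=
      intervalIntegral.integral_eq_sub_of_hasDerivAt (fun t ht => hh t (hsub ht)) hDint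
    have hmono : (∫ t in (0:ℝ)..T, ‖gradient f (u t)‖) ≤ ∫ t in (0:ℝ)..T, -D t := by
      apply intervalIntegral.integral_mono_on hT hGint hDint.neg
      intro t ht
      exact hkey t ht.1
    have hTpos : 0 ≤ (1 / (c * (1 - γ))) * f (u T) ^ (1 - γ) := by
      have := (hpos T hT)
      positivity
    calc (∫ t in (0:ℝ)..T, ‖gradient f (u t)‖) ≤ ∫ t in (0:ℝ)..T, -D t := hmono
      _ = -(∫ t in (0:ℝ)..T, D t) := intervalIntegral.integral_neg
      _ = (1 / (c * (1 - γ))) * f (u 0) ^ (1 - γ)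
          - (1 / (c * (1 - γ))) * f (u T) ^ (1 - γ) := by rw [ftc]; ring
      _ ≤ M := by rw [hM]; linarith
  -- integrability on Ioi 0
  have hIocInt : ∀ i : ℕ, IntegrableOn (fun t => ‖gradient f (u t)‖) (Set.Ioc (0:ℝ) i) := by
    intro i
    apply MeasureTheory.IntegrableOn.mono_set _ Set.Ioc_subset_Icc_self
    exact (hGcont.mono (Set.Icc_subset_Ici_self)).integrableOn_Icc
  have hInt : IntegrableOn (fun t => ‖gradient f (u t)‖) (Set.Ioi 0) := by
    apply MeasureTheory.integrableOn_Ioi_of_intervalIntegral_norm_bounded M 0 hIocInt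
      tendsto_natCast_atTop_atTop
    filter_upwards with i
    simpa only [norm_norm] using hbound i (Nat.cast_nonneg i)
  refine ⟨hInt, ?_, ?_⟩
  · have htend := MeasureTheory.intervalIntegral_tendsto_integral_Ioi 0 hInt tendsto_id
    apply le_of_tendsto htend
    filter_upwards [eventually_ge_atTop (0:ℝ)] with T hT
    simpa using hbound T hT
  · -- convergence
    set v : ℝ → EuclideanSpace ℝ (Fin n) := fun t => -gradient f (u t) with hv
    have hvcont : ContinuousOn v (Set.Ici 0) := (hgradc.comp_continuousOn hcu).neg
    have hvInt : IntegrableOn v (Set.Ioi 0) := by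
      apply MeasureTheory.Integrable.mono' hInt
      · exact (hvcont.mono Set.Ioi_subset_Ici_self).aestronglyMeasurable measurableSet_Ioi
      · filter_upwards with t
        simp [hv]
    have hvtend := MeasureTheory.intervalIntegral_tendsto_integral_Ioi 0 hvInt tendsto_id
    refine ⟨u 0 + ∫ t in Set.Ioi (0:ℝ), v t, ?_⟩
    have h2 : Tendsto (fun T => u 0 + ∫ t in (0:ℝ)..T, v t) atTop
        (nhds (u 0 + ∫ t in Set.Ioi (0:ℝ), v t)) := tendsto_const_nhds.add hvtend
    apply h2.congr'
    filter_upwards [eventually_ge_atTop (0:ℝ)] with T hT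
    have hsub : Set.uIcc (0:ℝ) T ⊆ Set.Ici 0 := by
      rw [Set.uIcc_of_le hT]; exact Set.Icc_subset_Ici_self
    have ftc : (∫ t in (0:ℝ)..T, v t) = u T - u 0 :=
      intervalIntegral.integral_eq_sub_of_hasDerivAt (fun t ht => hu t (hsub ht))
        (hvcont.mono hsub).intervalIntegrable
    rw [ftc]; abel
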